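/- Let ⊢ be a finitary abstract consequence relation on a set A with infinitely many theorems, and ⊢' its lifted multi-conclusion version (X ⊢' Y iff X ⊢ a for all a ∈ Y). Define X ⊩ Y iff there is a finite Y' ⊆ Y such that Y \ Y' ⊆ X and X ⊢' Y'. Then ⊩ is a deductive relation on ⟨𝒫(A), ⊆, ∪, ∅⟩ but ⊩ is not a Galatos–Tsinakis consequence relation on the complete lattice 𝒫(A). -/
import Mathlib


/-- For a finitary abstract consequence relation with infinitely many theorems, the
relation `X ⊩ Y iff ∃ finite Y' ⊆ Y, Y \ Y' ⊆ X and X ⊢ a for all a ∈ Y'` is a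
deductive relation on `⟨𝒫(A), ⊆, ∪, ∅⟩` but not a Galatos–Tsinakis consequence
relation on the complete lattice `𝒫(A)`. -/
theorem dr_not_gtcr {A : Type*} (vd : Set A → A → Prop)
    (hrefl : ∀ (X : Set A) (a : A), a ∈ X → vd X a)
    (hmono : ∀ (X Y : Set A) (a : A), vd X a → X ⊆ Y → vd Y a)
    (hcut : ∀ (X Y : Set A) (a : A), vd Y a → (∀ b ∈ Y, vd X b) → vd X a)
    (hfin : ∀ (X : Set A) (a : A), vd X a → ∃ X' : Set A, X' ⊆ X ∧ X'.Finite ∧ vd X' a)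
    (hinf : {a : A | vd ∅ a}.Infinite)
    (Vd : Set A → Set A → Prop)
    (hVd : ∀ X Y : Set A,
      Vd X Y ↔ ∃ Y' : Set A, Y' ⊆ Y ∧ Y'.Finite ∧ Y \ Y' ⊆ X ∧ ∀ a ∈ Y', vd X a) :
    -- Vd is a deductive relation on ⟨𝒫(A), ⊆, ∪, ∅⟩
    ((∀ X Y : Set A, X ⊆ Y → Vd Y X) ∧
     (∀ X Y Z : Set A, Vd X Y → Vd Y Z → Vd X Z) ∧
     (∀ X Y Z : Set A, Vd X Y → Vd (X ∪ Z) (Y ∪ Z))) ∧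
    -- but Vd is not a Galatos–Tsinakis consequence relation on 𝒫(A)
    ¬ ((∀ X : Set A, Vd X X) ∧
       (∀ X Y Z : Set A, Vd X Y → Vd Y Z → Vd X Z) ∧
       (∀ X Y : Set A, X ⊆ Y → Vd Y X) ∧
       (∀ X : Set A, Vd X (⋃₀ {Z : Set A | Vd X Z}))) := by
  constructor
  · refine ⟨fun X Y hXY => ?_, fun X Y Z hXY hYZ => ?_, fun X Y Z hXY => ?_⟩
    · exact (hVd Y X).2 ⟨∅, by simp, Set.finite_empty, by simpa using hXY, by simp⟩
    · obtain ⟨Y', hY'Y, hY'fin, hYX, hvdX⟩ := (hVd X Y).1 hXY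
      obtain ⟨Z', hZ'Z, hZ'fin, hZY, hvdY⟩ := (hVd Y Z).1 hYZ
      have hall : ∀ b ∈ Y, vd X b := by
        intro b hb
        by_cases hb' : b ∈ Y'
        · exact hvdX b hb'
        · exact hrefl X b (hYX ⟨hb, hb'⟩)
      refine (hVd X Z).2 ⟨Z' ∪ (Z ∩ Y'), ?_, hZ'fin.union (hY'fin.subset Set.inter_subset_right),
        ?_, ?_⟩
      · exact Set.union_subset hZ'Z Set.inter_subset_left
      · intro a ha
        have haZ' : a ∉ Z' := fun h => ha.2 (Or.inl h)
        have haY : a ∈ Y := hZY ⟨ha.1, haZ'⟩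
        have haY' : a ∉ Y' := fun h => ha.2 (Or.inr ⟨ha.1, h⟩)
        exact hYX ⟨haY, haY'⟩
      · intro a ha
        rcases ha with ha | ha
        · exact hcut X Y a (hvdY a ha) hall
        · exact hvdX a ha.2
    · obtain ⟨Y', hY'Y, hY'fin, hYX, hvdX⟩ := (hVd X Y).1 hXY
      refine (hVd (X ∪ Z) (Y ∪ Z)).2 ⟨Y', hY'Y.trans Set.subset_union_left, hY'fin, ?_, ?_⟩
      · intro a ha
        rcases ha.1 with h | h
        · exact Or.inl (hYX ⟨h, ha.2⟩)
        · exact Or.inr h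
      · exact fun a ha => hmono X (X ∪ Z) a (hvdX a ha) Set.subset_union_left
  · rintro ⟨-, -, -, hsup⟩
    have hsub : {a : A | vd ∅ a} ⊆ ⋃₀ {Z : Set A | Vd ∅ Z} := by
      intro a ha
      refine ⟨{a}, ?_, rfl⟩
      exact (hVd ∅ {a}).2 ⟨{a}, subset_rfl, Set.finite_singleton a, by simp, by simpa using ha⟩
    obtain ⟨Y', _, hY'fin, hsub2, -⟩ := (hVd ∅ _).1 (hsup ∅)
    have : (⋃₀ {Z : Set A | Vd ∅ Z}) ⊆ Y' := fun x hx => by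
      by_contra h; exact (hsub2 ⟨hx, h⟩)
    exact hinf.mono (hsub.trans this) hY'fin
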